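/- Let n ≥ 1, τ, ε > 0, and let V_X : ℝ → ℝ (X ∈ ℤⁿ) be C¹ with divided differences B_X(λ,μ). Suppose ψ : ℤⁿ × ℤ → ℂ^N has ψ^t ∈ ℓ²(ℤⁿ) for all t and satisfies the Strauss–Vazquez scheme (ψ_X^{t+1} − 2ψ_X^t + ψ_X^{t−1})/τ² = ∑_{j=1}^n (ψ_{X+e_j}^t − 2ψ_X^t + ψ_{X−e_j}^t)/ε² − B_X(|ψ_X^{t+1}|², |ψ_X^{t−1}|²)(ψ_X^{t+1} + ψ_X^{t−1}). Then the discrete energy E^t = εⁿ ∑_X [ (1/τ² − n/ε²)|ψ_X^{t+1} − ψ_X^t|²/2 + ∑_{j=1}^n ∑_± |ψ_X^{t+1} − ψ_{X±e_j}^t|²/(4ε²) + (V_X(|ψ_X^{t+1}|²) + V_X(|ψ_X^t|²))/2 ] satisfies E^t = E^{t−1} for all t ∈ ℤ. -/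

import Mathlib

open scoped InnerProductSpace

lemma sv_re_inner_eq {N : ℕ} (x y : EuclideanSpace ℂ (Fin N)) :
    RCLike.re (inner ℂ x y) = (‖x‖^2 + ‖y‖^2 - ‖x - y‖^2)/2 := by
  have := @norm_sub_sq ℂ _ _ _ _ x y
  linarith

lemma sv_key {N : ℕ} (a c v : EuclideanSpace ℂ (Fin N)) :
    RCLike.re (inner ℂ (a - c) v)
      = (‖c - v‖^2 - ‖a - v‖^2 + ‖a‖^2 - ‖c‖^2)/2 := by
  simp only [inner_sub_left, map_sub, sv_re_inner_eq]
  ring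

lemma sv_pointwise {n N : ℕ} (τ ε Bv Va Vb Vc : ℝ)
    (a b c : EuclideanSpace ℂ (Fin N)) (bp bm : Fin n → EuclideanSpace ℂ (Fin N))
    (hs : (τ ^ 2)⁻¹ • (a - (2:ℝ) • b + c)
        = (ε ^ 2)⁻¹ • (∑ j : Fin n, (bp j - (2:ℝ) • b + bm j)) - Bv • (a + c))
    (hBe : Bv * (‖a‖^2 - ‖c‖^2) = Va - Vc) :
    (1/τ^2 - n/ε^2) * ‖a - b‖^2/2
      + (∑ j : Fin n, (‖a - bp j‖^2 + ‖a - bm j‖^2))/(4*ε^2) + (Va + Vb)/2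
    = (1/τ^2 - n/ε^2) * ‖b - c‖^2/2
      + (∑ j : Fin n, (‖c - bp j‖^2 + ‖c - bm j‖^2))/(4*ε^2) + (Vb + Vc)/2 := by
  have hss := congrArg (fun v => RCLike.re (inner (𝕜 := ℂ) (a - c) v)) hs
  simp only [RCLike.real_smul_eq_coe_smul (K := ℂ), inner_sub_right, inner_add_right,
    inner_smul_right, inner_sum, map_sub, map_add, map_sum, RCLike.re_ofReal_mul,
    sv_key] at hss
  simp only [Finset.sum_div, Finset.sum_add_distrib, Finset.sum_sub_distrib,
    Finset.sum_const, Finset.card_univ, Fintype.card_fin, nsmul_eq_mul] at hss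
  rw [Finset.sum_add_distrib, Finset.sum_add_distrib]
  have h1 : ‖c - a‖ = ‖a - c‖ := norm_sub_rev _ _
  have h2 : ‖c - b‖ = ‖b - c‖ := norm_sub_rev _ _
  simp only [sub_div, add_div, Finset.sum_sub_distrib, Finset.sum_add_distrib,
    Finset.sum_const, Finset.card_univ, Fintype.card_fin, nsmul_eq_mul,
    ← Finset.sum_div, h1, h2, sub_self, norm_zero] at hss
  linear_combination (1/2 : ℝ) * hss - (1/2 : ℝ) * hBe

lemma sv_summable_sub {n N : ℕ} (φ χ : (Fin n → ℤ) → EuclideanSpace ℂ (Fin N))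
    (hφ : Summable fun X => ‖φ X‖^2) (hχ : Summable fun X => ‖χ X‖^2) :
    Summable fun X => ‖φ X - χ X‖^2 := by
  refine Summable.of_nonneg_of_le (fun X => by positivity) (fun X => ?_)
    (((hφ.add hχ).mul_left 2))
  have h1 := norm_sub_le (φ X) (χ X)
  have h2 : ‖φ X - χ X‖^2 ≤ (‖φ X‖ + ‖χ X‖)^2 :=
    pow_le_pow_left₀ (norm_nonneg _) h1 2
  nlinarith [sq_nonneg (‖φ X‖ - ‖χ X‖)]

lemma sv_summable_shift {n : ℕ} (v : Fin n → ℤ) (f : (Fin n → ℤ) → ℝ)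
    (hf : Summable f) : Summable (fun X => f (X + v)) :=
  (Equiv.summable_iff (Equiv.addRight v)).2 hf

lemma sv_summable_shift' {n : ℕ} (v : Fin n → ℤ) (f : (Fin n → ℤ) → ℝ)
    (hf : Summable f) : Summable (fun X => f (X - v)) := by
  simpa [sub_eq_add_neg] using sv_summable_shift (-v) f hf

lemma sv_tsum_shift {n : ℕ} (v : Fin n → ℤ) (f : (Fin n → ℤ) → ℝ) :
    ∑' X, f (X + v) = ∑' X, f X :=
  Equiv.tsum_eq (Equiv.addRight v) f

lemma sv_tsum_swap {n N : ℕ} (v : Fin n → ℤ)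
    (φ χ : (Fin n → ℤ) → EuclideanSpace ℂ (Fin N)) :
    ∑' X, ‖χ X - φ (X + v)‖^2 = ∑' X, ‖φ X - χ (X - v)‖^2 := by
  rw [← sv_tsum_shift v (fun X => ‖φ X - χ (X - v)‖^2)]
  refine tsum_congr fun X => ?_
  rw [add_sub_cancel_right, norm_sub_rev]

lemma sv_tsum_swap' {n N : ℕ} (v : Fin n → ℤ)
    (φ χ : (Fin n → ℤ) → EuclideanSpace ℂ (Fin N)) :
    ∑' X, ‖χ X - φ (X - v)‖^2 = ∑' X, ‖φ X - χ (X + v)‖^2 := by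
  have := sv_tsum_swap (-v) φ χ
  simpa [sub_eq_add_neg, sub_neg_eq_add] using this
theorem stmt12 (n N : ℕ) (hn : 1 ≤ n) (hN : 1 ≤ N)
    (τ ε : ℝ) (hτ : 0 < τ) (hε : 0 < ε)
    (V : (Fin n → ℤ) → ℝ → ℝ) (hV : ∀ X, ContDiff ℝ 1 (V X))
    (B : (Fin n → ℤ) → ℝ → ℝ → ℝ)
    (hB : ∀ X (l m : ℝ), B X l m =
      if l = m then deriv (V X) l else (V X l - V X m) / (l - m))
    (ψ : ℤ → (Fin n → ℤ) → EuclideanSpace ℂ (Fin N))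
    (hl2 : ∀ t : ℤ, Summable fun X : Fin n → ℤ => ‖ψ t X‖ ^ 2)
    (hVsum : ∀ t : ℤ, Summable fun X : Fin n → ℤ => V X (‖ψ t X‖ ^ 2))
    (hscheme : ∀ (t : ℤ) (X : Fin n → ℤ),
      (τ ^ 2)⁻¹ • (ψ (t + 1) X - (2 : ℝ) • ψ t X + ψ (t - 1) X)
        = (ε ^ 2)⁻¹ • (∑ j : Fin n,
            (ψ t (X + Pi.single j 1) - (2 : ℝ) • ψ t X + ψ t (X - Pi.single j 1)))
          - B X (‖ψ (t + 1) X‖ ^ 2) (‖ψ (t - 1) X‖ ^ 2)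
              • (ψ (t + 1) X + ψ (t - 1) X))
    (E : ℤ → ℝ)
    (hE : ∀ t : ℤ, E t = ε ^ n * ∑' X : Fin n → ℤ,
      ((1 / τ ^ 2 - n / ε ^ 2) * ‖ψ (t + 1) X - ψ t X‖ ^ 2 / 2
        + (∑ j : Fin n, (‖ψ (t + 1) X - ψ t (X + Pi.single j 1)‖ ^ 2
            + ‖ψ (t + 1) X - ψ t (X - Pi.single j 1)‖ ^ 2)) / (4 * ε ^ 2)
        + (V X (‖ψ (t + 1) X‖ ^ 2) + V X (‖ψ t X‖ ^ 2)) / 2)) :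
    ∀ t : ℤ, E t = E (t - 1) := by
  intro t
  have ht : t - 1 + 1 = t := by ring
  rw [hE t, hE (t - 1), ht]
  congr 1
  -- pointwise identity from the scheme
  have hBe : ∀ X : Fin n → ℤ,
      B X (‖ψ (t + 1) X‖ ^ 2) (‖ψ (t - 1) X‖ ^ 2)
        * (‖ψ (t + 1) X‖ ^ 2 - ‖ψ (t - 1) X‖ ^ 2)
      = V X (‖ψ (t + 1) X‖ ^ 2) - V X (‖ψ (t - 1) X‖ ^ 2) := by
    intro X
    rw [hB]
    split_ifs with h
    · rw [h]; ring
    · rw [div_mul_cancel₀ _ (sub_ne_zero_of_ne h)]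
  have hpt : ∀ X : Fin n → ℤ,
      (1 / τ ^ 2 - n / ε ^ 2) * ‖ψ (t + 1) X - ψ t X‖ ^ 2 / 2
        + (∑ j : Fin n, (‖ψ (t + 1) X - ψ t (X + Pi.single j 1)‖ ^ 2
            + ‖ψ (t + 1) X - ψ t (X - Pi.single j 1)‖ ^ 2)) / (4 * ε ^ 2)
        + (V X (‖ψ (t + 1) X‖ ^ 2) + V X (‖ψ t X‖ ^ 2)) / 2
      = (1 / τ ^ 2 - n / ε ^ 2) * ‖ψ t X - ψ (t - 1) X‖ ^ 2 / 2
        + (∑ j : Fin n, (‖ψ (t - 1) X - ψ t (X + Pi.single j 1)‖ ^ 2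
            + ‖ψ (t - 1) X - ψ t (X - Pi.single j 1)‖ ^ 2)) / (4 * ε ^ 2)
        + (V X (‖ψ t X‖ ^ 2) + V X (‖ψ (t - 1) X‖ ^ 2)) / 2 := by
    intro X
    exact sv_pointwise τ ε _ _ _ _ (ψ (t + 1) X) (ψ t X) (ψ (t - 1) X)
      (fun j => ψ t (X + Pi.single j 1)) (fun j => ψ t (X - Pi.single j 1))
      (hscheme t X) (hBe X)
  rw [tsum_congr hpt]
  -- summability facts
  have Sbp : ∀ j : Fin n, Summable fun X : Fin n → ℤ => ‖ψ t (X + Pi.single j 1)‖ ^ 2 :=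
    fun j => sv_summable_shift (Pi.single j 1) (fun X => ‖ψ t X‖ ^ 2) (hl2 t)
  have Sbm : ∀ j : Fin n, Summable fun X : Fin n → ℤ => ‖ψ t (X - Pi.single j 1)‖ ^ 2 :=
    fun j => sv_summable_shift' (Pi.single j 1) (fun X => ‖ψ t X‖ ^ 2) (hl2 t)
  have Scp : ∀ j : Fin n, Summable fun X : Fin n → ℤ => ‖ψ (t - 1) (X + Pi.single j 1)‖ ^ 2 :=
    fun j => sv_summable_shift (Pi.single j 1) (fun X => ‖ψ (t - 1) X‖ ^ 2) (hl2 (t - 1))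
  have Scm : ∀ j : Fin n, Summable fun X : Fin n → ℤ => ‖ψ (t - 1) (X - Pi.single j 1)‖ ^ 2 :=
    fun j => sv_summable_shift' (Pi.single j 1) (fun X => ‖ψ (t - 1) X‖ ^ 2) (hl2 (t - 1))
  have Su : ∀ j : Fin n, Summable fun X : Fin n → ℤ =>
      ‖ψ (t - 1) X - ψ t (X + Pi.single j 1)‖ ^ 2
        + ‖ψ (t - 1) X - ψ t (X - Pi.single j 1)‖ ^ 2 :=
    fun j => (sv_summable_sub _ _ (hl2 (t - 1)) (Sbp j)).add
      (sv_summable_sub _ _ (hl2 (t - 1)) (Sbm j))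
  have Sw : ∀ j : Fin n, Summable fun X : Fin n → ℤ =>
      ‖ψ t X - ψ (t - 1) (X + Pi.single j 1)‖ ^ 2
        + ‖ψ t X - ψ (t - 1) (X - Pi.single j 1)‖ ^ 2 :=
    fun j => (sv_summable_sub _ _ (hl2 t) (Scp j)).add
      (sv_summable_sub _ _ (hl2 t) (Scm j))
  have SU : Summable fun X : Fin n → ℤ => ∑ j : Fin n,
      (‖ψ (t - 1) X - ψ t (X + Pi.single j 1)‖ ^ 2
        + ‖ψ (t - 1) X - ψ t (X - Pi.single j 1)‖ ^ 2) :=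
    summable_sum fun j _ => Su j
  have SW : Summable fun X : Fin n → ℤ => ∑ j : Fin n,
      (‖ψ t X - ψ (t - 1) (X + Pi.single j 1)‖ ^ 2
        + ‖ψ t X - ψ (t - 1) (X - Pi.single j 1)‖ ^ 2) :=
    summable_sum fun j _ => Sw j
  have SA : Summable fun X : Fin n → ℤ =>
      (1 / τ ^ 2 - (n : ℝ) / ε ^ 2) * ‖ψ t X - ψ (t - 1) X‖ ^ 2 / 2
        + (V X (‖ψ t X‖ ^ 2) + V X (‖ψ (t - 1) X‖ ^ 2)) / 2 :=
    ((((sv_summable_sub _ _ (hl2 t) (hl2 (t - 1))).mul_left _).div_const 2)).add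
      (((hVsum t).add (hVsum (t - 1))).div_const 2)
  calc
    ∑' X : Fin n → ℤ,
        ((1 / τ ^ 2 - n / ε ^ 2) * ‖ψ t X - ψ (t - 1) X‖ ^ 2 / 2
          + (∑ j : Fin n, (‖ψ (t - 1) X - ψ t (X + Pi.single j 1)‖ ^ 2
              + ‖ψ (t - 1) X - ψ t (X - Pi.single j 1)‖ ^ 2)) / (4 * ε ^ 2)
          + (V X (‖ψ t X‖ ^ 2) + V X (‖ψ (t - 1) X‖ ^ 2)) / 2)
      = ∑' X : Fin n → ℤ,
        (((1 / τ ^ 2 - n / ε ^ 2) * ‖ψ t X - ψ (t - 1) X‖ ^ 2 / 2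
          + (V X (‖ψ t X‖ ^ 2) + V X (‖ψ (t - 1) X‖ ^ 2)) / 2)
          + (∑ j : Fin n, (‖ψ (t - 1) X - ψ t (X + Pi.single j 1)‖ ^ 2
              + ‖ψ (t - 1) X - ψ t (X - Pi.single j 1)‖ ^ 2)) / (4 * ε ^ 2)) :=
        tsum_congr fun X => by ring
    _ = (∑' X : Fin n → ℤ,
          ((1 / τ ^ 2 - n / ε ^ 2) * ‖ψ t X - ψ (t - 1) X‖ ^ 2 / 2
            + (V X (‖ψ t X‖ ^ 2) + V X (‖ψ (t - 1) X‖ ^ 2)) / 2))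
        + (∑' X : Fin n → ℤ, ∑ j : Fin n,
            (‖ψ (t - 1) X - ψ t (X + Pi.single j 1)‖ ^ 2
              + ‖ψ (t - 1) X - ψ t (X - Pi.single j 1)‖ ^ 2)) / (4 * ε ^ 2) := by
        rw [Summable.tsum_add SA (SU.div_const _), tsum_div_const]
    _ = (∑' X : Fin n → ℤ,
          ((1 / τ ^ 2 - n / ε ^ 2) * ‖ψ t X - ψ (t - 1) X‖ ^ 2 / 2
            + (V X (‖ψ t X‖ ^ 2) + V X (‖ψ (t - 1) X‖ ^ 2)) / 2))
        + (∑ j : Fin n, ∑' X : Fin n → ℤ,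
            (‖ψ (t - 1) X - ψ t (X + Pi.single j 1)‖ ^ 2
              + ‖ψ (t - 1) X - ψ t (X - Pi.single j 1)‖ ^ 2)) / (4 * ε ^ 2) := by
        rw [Summable.tsum_finsetSum fun j _ => Su j]
    _ = (∑' X : Fin n → ℤ,
          ((1 / τ ^ 2 - n / ε ^ 2) * ‖ψ t X - ψ (t - 1) X‖ ^ 2 / 2
            + (V X (‖ψ t X‖ ^ 2) + V X (‖ψ (t - 1) X‖ ^ 2)) / 2))
        + (∑ j : Fin n, ∑' X : Fin n → ℤ,
            (‖ψ t X - ψ (t - 1) (X + Pi.single j 1)‖ ^ 2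
              + ‖ψ t X - ψ (t - 1) (X - Pi.single j 1)‖ ^ 2)) / (4 * ε ^ 2) := by
        congr 2
        refine Finset.sum_congr rfl fun j _ => ?_
        rw [Summable.tsum_add (sv_summable_sub _ _ (hl2 (t - 1)) (Sbp j))
            (sv_summable_sub _ _ (hl2 (t - 1)) (Sbm j)),
          Summable.tsum_add (sv_summable_sub _ _ (hl2 t) (Scp j))
            (sv_summable_sub _ _ (hl2 t) (Scm j)),
          sv_tsum_swap (Pi.single j 1) (ψ t) (ψ (t - 1)),
          sv_tsum_swap' (Pi.single j 1) (ψ t) (ψ (t - 1)), add_comm]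
    _ = (∑' X : Fin n → ℤ,
          ((1 / τ ^ 2 - n / ε ^ 2) * ‖ψ t X - ψ (t - 1) X‖ ^ 2 / 2
            + (V X (‖ψ t X‖ ^ 2) + V X (‖ψ (t - 1) X‖ ^ 2)) / 2))
        + (∑' X : Fin n → ℤ, ∑ j : Fin n,
            (‖ψ t X - ψ (t - 1) (X + Pi.single j 1)‖ ^ 2
              + ‖ψ t X - ψ (t - 1) (X - Pi.single j 1)‖ ^ 2)) / (4 * ε ^ 2) := by
        rw [Summable.tsum_finsetSum fun j _ => Sw j]
    _ = ∑' X : Fin n → ℤ,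
        (((1 / τ ^ 2 - n / ε ^ 2) * ‖ψ t X - ψ (t - 1) X‖ ^ 2 / 2
          + (V X (‖ψ t X‖ ^ 2) + V X (‖ψ (t - 1) X‖ ^ 2)) / 2)
          + (∑ j : Fin n, (‖ψ t X - ψ (t - 1) (X + Pi.single j 1)‖ ^ 2
              + ‖ψ t X - ψ (t - 1) (X - Pi.single j 1)‖ ^ 2)) / (4 * ε ^ 2)) := by
        rw [Summable.tsum_add SA (SW.div_const _), tsum_div_const]
    _ = ∑' X : Fin n → ℤ,
        ((1 / τ ^ 2 - n / ε ^ 2) * ‖ψ t X - ψ (t - 1) X‖ ^ 2 / 2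
          + (∑ j : Fin n, (‖ψ t X - ψ (t - 1) (X + Pi.single j 1)‖ ^ 2
              + ‖ψ t X - ψ (t - 1) (X - Pi.single j 1)‖ ^ 2)) / (4 * ε ^ 2)
          + (V X (‖ψ t X‖ ^ 2) + V X (‖ψ (t - 1) X‖ ^ 2)) / 2) :=
        tsum_congr fun X => by ring
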